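/- Let (M,ω) be a connected symplectic manifold with a symplectic action of a connected Lie group G, and fix z₀ ∈ M. For a homotopy class x̃ of paths x : [0,1] → M with x(0) = z₀, and ξ in the Lie algebra 𝔤, the integral ∫₀¹ ω(x(t))(ξ_M(x(t)), ẋ(t)) dt depends only on the homotopy class of x rel endpoints. The resulting map J : M̃ → 𝔤*, ⟨J(x̃), ξ⟩ = ∫₀¹ x*(ι_{ξ_M} ω), is a momentum map for the lifted G̃-action on (M̃, q*ω): for each ξ ∈ 𝔤, d⟨J,ξ⟩ = ι_{ξ_{M̃}} (q*ω). -/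

import Mathlib

open intervalIntegral

namespace Stmt10Aux

open MeasureTheory Metric Set intervalIntegral


variable {E : Type*} [NormedAddCommGroup E] [NormedSpace ℝ E]

/-- continuity of α on s -/
lemma alpha_cont {s : Set E} (hs : IsOpen s) {α : E → E →L[ℝ] ℝ}
    (hαdiff : ∀ x ∈ s, DifferentiableAt ℝ α x) {z : E} (hz : z ∈ s) :
    ContinuousAt α z := (hαdiff z hz).continuousAt

/-- Green step: segment-based primitive difference formula. -/
lemma green {s : Set E} (hs : IsOpen s) {α : E → E →L[ℝ] ℝ}
    (hαdiff : ∀ x ∈ s, DifferentiableAt ℝ α x)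
    (hαclosed : ∀ x ∈ s, ∀ u v, fderiv ℝ α x u v = fderiv ℝ α x v u)
    {c : E} {r : ℝ} (hball : ball c r ⊆ s) {x y : E}
    (hx : x ∈ ball c r) (hy : y ∈ ball c r) :
    (∫ τ in (0:ℝ)..1, α (c + τ • (y - c)) (y - c))
      - (∫ τ in (0:ℝ)..1, α (c + τ • (x - c)) (x - c))
      = ∫ τ in (0:ℝ)..1, α (x + τ • (y - x)) (y - x) := by
  classical
  -- the parametrization
  set P : ℝ × ℝ → E := fun p => c + p.1 • (x - c) + (p.1 * p.2) • (y - x) with hP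
  have hPmem : ∀ p ∈ Icc (0:ℝ) 1 ×ˢ Icc (0:ℝ) 1, P p ∈ ball c r := by
    rintro ⟨σ, τ⟩ ⟨⟨hσ0, hσ1⟩, hτ0, hτ1⟩
    have : P (σ, τ) - c = σ • ((1 - τ) • (x - c) + τ • (y - c)) := by
      simp only [hP]; module
    rw [mem_ball, dist_eq_norm, this]
    have hx' : ‖x - c‖ < r := by rwa [mem_ball, dist_eq_norm] at hx
    have hy' : ‖y - c‖ < r := by rwa [mem_ball, dist_eq_norm] at hy
    calc ‖σ • ((1 - τ) • (x - c) + τ • (y - c))‖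
        ≤ 1 * ‖(1 - τ) • (x - c) + τ • (y - c)‖ := by
          rw [norm_smul, Real.norm_eq_abs, abs_of_nonneg hσ0]
          exact mul_le_mul_of_nonneg_right hσ1 (norm_nonneg _)
      _ ≤ (1 - τ) * ‖x - c‖ + τ * ‖y - c‖ := by
          rw [one_mul]
          refine (norm_add_le _ _).trans ?_
          rw [norm_smul, norm_smul, Real.norm_eq_abs, Real.norm_eq_abs,
            abs_of_nonneg (by linarith), abs_of_nonneg hτ0]
      _ ≤ max ‖x - c‖ ‖y - c‖ := by
          simp only at hτ0 hτ1
          nlinarith [le_max_left ‖x - c‖ ‖y - c‖, le_max_right ‖x - c‖ ‖y - c‖]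
      _ < r := max_lt hx' hy'
  -- derivative of P
  set DP : ℝ × ℝ → (ℝ × ℝ) →L[ℝ] E := fun p =>
    (ContinuousLinearMap.fst ℝ ℝ ℝ).smulRight (x - c) +
      (p.2 • ContinuousLinearMap.fst ℝ ℝ ℝ + p.1 • ContinuousLinearMap.snd ℝ ℝ ℝ).smulRight
        (y - x) with hDPdef
  have hDP : ∀ p : ℝ × ℝ, HasFDerivAt P (DP p) p := by
    intro p
    have h1 : HasFDerivAt (fun p : ℝ × ℝ => p.1 • (x - c))
        ((ContinuousLinearMap.fst ℝ ℝ ℝ).smulRight (x - c)) p := by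
      have := (hasFDerivAt_fst (𝕜 := ℝ) (p := p)).smul (hasFDerivAt_const (x - c) p)
      simp at this; exact this
    have h2 : HasFDerivAt (fun p : ℝ × ℝ => (p.1 * p.2) • (y - x))
        ((p.1 • ContinuousLinearMap.snd ℝ ℝ ℝ + p.2 • ContinuousLinearMap.fst ℝ ℝ ℝ).smulRight
          (y - x)) p := by
      have := ((hasFDerivAt_fst (𝕜 := ℝ) (p := p)).mul
        (hasFDerivAt_snd (𝕜 := ℝ) (p := p))).smul (hasFDerivAt_const (y - x) p)
      simp at this; exact this
    have := ((hasFDerivAt_const c p).fun_add h1).fun_add h2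
    refine this.congr_fderiv ?_
    rw [hDPdef]
    ext v <;> simp [add_comm]
  have hPc : Continuous P := by fun_prop
  have hαc : ContinuousOn α s := fun z hz => (hαdiff z hz).continuousAt.continuousWithinAt
  -- evaluation maps
  set ev : (E →L[ℝ] ℝ) →L[ℝ] ℝ := ContinuousLinearMap.apply ℝ ℝ (y - x) with hev
  set eu : (E →L[ℝ] ℝ) →L[ℝ] ℝ := ContinuousLinearMap.apply ℝ ℝ (x - c) with heu
  set Dv : ℝ × ℝ → (ℝ × ℝ) →L[ℝ] ℝ := fun p =>
    ev.comp ((fderiv ℝ α (P p)).comp (DP p)) with hDv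
  set Du : ℝ × ℝ → (ℝ × ℝ) →L[ℝ] ℝ := fun p =>
    eu.comp ((fderiv ℝ α (P p)).comp (DP p)) with hDu
  set F : ℝ × ℝ → ℝ := fun p => p.1 * α (P p) (y - x) with hFdef
  set G : ℝ × ℝ → ℝ := fun p => -(α (P p) (x - c)) - p.2 * α (P p) (y - x) with hGdef
  set F' : ℝ × ℝ → (ℝ × ℝ) →L[ℝ] ℝ := fun p =>
    p.1 • Dv p + (α (P p) (y - x)) • ContinuousLinearMap.fst ℝ ℝ ℝ with hF'
  set G' : ℝ × ℝ → (ℝ × ℝ) →L[ℝ] ℝ := fun p =>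
    -(Du p) - (p.2 • Dv p + (α (P p) (y - x)) • ContinuousLinearMap.snd ℝ ℝ ℝ) with hG'
  have hαPv : ∀ p : ℝ × ℝ, P p ∈ s → HasFDerivAt (fun q => α (P q) (y - x)) (Dv p) p := by
    intro p hp
    exact (ev.hasFDerivAt).comp p (((hαdiff _ hp).hasFDerivAt).comp p (hDP p))
  have hαPu : ∀ p : ℝ × ℝ, P p ∈ s → HasFDerivAt (fun q => α (P q) (x - c)) (Du p) p := by
    intro p hp
    exact (eu.hasFDerivAt).comp p (((hαdiff _ hp).hasFDerivAt).comp p (hDP p))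
  have hFd : ∀ p : ℝ × ℝ, P p ∈ s → HasFDerivAt F (F' p) p := by
    intro p hp
    exact (hasFDerivAt_fst (𝕜 := ℝ) (p := p)).mul (hαPv p hp)
  have hGd : ∀ p : ℝ × ℝ, P p ∈ s → HasFDerivAt G (G' p) p := by
    intro p hp
    exact ((hαPu p hp).neg).sub ((hasFDerivAt_snd (𝕜 := ℝ) (p := p)).mul (hαPv p hp))
  -- divergence vanishes on the square
  have hdiv0 : ∀ p ∈ Icc (0:ℝ) 1 ×ˢ Icc (0:ℝ) 1, F' p (1, 0) + G' p (0, 1) = 0 := by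
    intro p hp
    have hps : P p ∈ s := hball (hPmem p hp)
    have hDP10 : DP p (1, 0) = (x - c) + p.2 • (y - x) := by
      simp [hDPdef]
    have hDP01 : DP p (0, 1) = p.1 • (y - x) := by
      simp [hDPdef]
    have hcl := hαclosed (P p) hps
    simp only [hF', hG', hDv, hDu, ContinuousLinearMap.add_apply,
      ContinuousLinearMap.smul_apply, ContinuousLinearMap.comp_apply,
      ContinuousLinearMap.neg_apply, ContinuousLinearMap.sub_apply, hev, heu,
      ContinuousLinearMap.apply_apply, hDP10, hDP01,
      ContinuousLinearMap.coe_fst', ContinuousLinearMap.coe_snd', map_add, _root_.map_smul]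
    simp only [ContinuousLinearMap.add_apply, ContinuousLinearMap.smul_apply, smul_eq_mul]
    rw [hcl (y - x) (x - c)]
    ring
  -- continuity on the square
  have hmaps : MapsTo P (Icc (0:ℝ) 1 ×ˢ Icc (0:ℝ) 1) s := fun p hp => hball (hPmem p hp)
  have hαPcont : ContinuousOn (fun p => α (P p)) (Icc (0:ℝ) 1 ×ˢ Icc (0:ℝ) 1) :=
    hαc.comp hPc.continuousOn hmaps
  have hFc : ContinuousOn F (Icc (0:ℝ) 1 ×ˢ Icc (0:ℝ) 1) :=
    continuousOn_fst.mul (hαPcont.clm_apply continuousOn_const)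
  have hGc : ContinuousOn G (Icc (0:ℝ) 1 ×ˢ Icc (0:ℝ) 1) :=
    ((hαPcont.clm_apply continuousOn_const).neg).sub
      (continuousOn_snd.mul (hαPcont.clm_apply continuousOn_const))
  have hsq : (Set.uIcc (0:ℝ) 1 ×ˢ Set.uIcc (0:ℝ) 1) = Icc (0:ℝ) 1 ×ˢ Icc (0:ℝ) 1 := by
    rw [uIcc_of_le (zero_le_one)]
  have hIoo : Ioo ((0:ℝ) ⊓ 1) ((0:ℝ) ⊔ 1) ×ˢ Ioo ((0:ℝ) ⊓ 1) ((0:ℝ) ⊔ 1) ⊆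
      Icc (0:ℝ) 1 ×ˢ Icc (0:ℝ) 1 := by
    rw [inf_of_le_left zero_le_one, sup_of_le_right zero_le_one]
    exact prod_mono Ioo_subset_Icc_self Ioo_subset_Icc_self
  have key := integral2_divergence_prod_of_hasFDerivAt_off_countable F G F' G'
    0 0 1 1 ∅ countable_empty (hsq ▸ hFc) (hsq ▸ hGc)
    (fun p hp => hFd p (hball (hPmem p (hIoo hp.1))))
    (fun p hp => hGd p (hball (hPmem p (hIoo hp.1))))
    (by
      refine (integrableOn_zero).congr_fun (fun p hp => ?_) ?_
      · exact (hdiv0 p (hsq ▸ hp)).symm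
      · exact measurableSet_uIcc.prod measurableSet_uIcc)
  -- LHS is zero
  have hL : (∫ σ in (0:ℝ)..1, ∫ τ in (0:ℝ)..1, F' (σ, τ) (1, 0) + G' (σ, τ) (0, 1)) = 0 := by
    have hin : ∀ σ ∈ Set.uIcc (0:ℝ) 1,
        (∫ τ in (0:ℝ)..1, F' (σ, τ) (1, 0) + G' (σ, τ) (0, 1)) = 0 := by
      intro σ hσ
      have heq : EqOn (fun τ => F' (σ, τ) (1, 0) + G' (σ, τ) (0, 1)) (fun _ => (0:ℝ))
          (Set.uIcc (0:ℝ) 1) := by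
        intro τ hτ
        exact hdiv0 (σ, τ) ⟨by rwa [uIcc_of_le zero_le_one] at hσ,
          by rwa [uIcc_of_le zero_le_one] at hτ⟩
      rw [intervalIntegral.integral_congr heq, intervalIntegral.integral_zero]
    rw [intervalIntegral.integral_congr hin, intervalIntegral.integral_zero]
  rw [hL] at key
  -- boundary terms
  have hG1 : (∫ σ in (0:ℝ)..1, G (σ, 1)) = -(∫ τ in (0:ℝ)..1, α (c + τ • (y - c)) (y - c)) := by
    rw [← intervalIntegral.integral_neg]
    refine intervalIntegral.integral_congr fun σ hσ => ?_
    have hPe : P (σ, 1) = c + σ • (y - c) := by simp only [hP]; module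
    simp only [hGdef, hPe]
    rw [show y - c = (x - c) + (y - x) by abel, map_add]
    ring
  have hG0 : (∫ σ in (0:ℝ)..1, G (σ, 0)) = -(∫ τ in (0:ℝ)..1, α (c + τ • (x - c)) (x - c)) := by
    rw [← intervalIntegral.integral_neg]
    refine intervalIntegral.integral_congr fun σ hσ => ?_
    have hPe : P (σ, 0) = c + σ • (x - c) := by simp only [hP]; module
    simp only [hGdef, hPe]
    ring
  have hF1 : (∫ τ in (0:ℝ)..1, F (1, τ)) = ∫ τ in (0:ℝ)..1, α (x + τ • (y - x)) (y - x) := by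
    refine intervalIntegral.integral_congr fun τ hτ => ?_
    have hPe : P (1, τ) = x + τ • (y - x) := by simp only [hP]; module
    simp only [hFdef, hPe]
    ring
  have hF0 : (∫ τ in (0:ℝ)..1, F (0, τ)) = 0 := by
    have heq : EqOn (fun τ => F (0, τ)) (fun _ => (0:ℝ)) (Set.uIcc (0:ℝ) 1) := by
      intro τ hτ
      simp [hFdef]
    rw [intervalIntegral.integral_congr heq, intervalIntegral.integral_zero]
  rw [hG1, hG0, hF1, hF0] at key
  linarith

/-- Local primitive of a closed 1-form on a ball. -/
lemma primitive_ball {s : Set E} (hs : IsOpen s) {α : E → E →L[ℝ] ℝ}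
    (hαdiff : ∀ x ∈ s, DifferentiableAt ℝ α x)
    (hαclosed : ∀ x ∈ s, ∀ u v, fderiv ℝ α x u v = fderiv ℝ α x v u)
    {c : E} {r : ℝ} (hball : ball c r ⊆ s) :
    ∃ f : E → ℝ, ∀ x ∈ ball c r, HasFDerivAt f (α x) x := by
  refine ⟨fun z => ∫ τ in (0:ℝ)..1, α (c + τ • (z - c)) (z - c), fun x hx => ?_⟩
  rw [hasFDerivAt_iff_isLittleO_nhds_zero]
  rw [Asymptotics.isLittleO_iff]
  intro ε hε
  have hcont : ContinuousAt α x := (hαdiff x (hball hx)).continuousAt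
  rcases Metric.continuousAt_iff.1 hcont ε hε with ⟨δ₀, hδ₀, hδ⟩
  have hrx : 0 < r - dist x c := by
    rw [mem_ball] at hx; linarith
  set δ := min δ₀ (r - dist x c) with hδdef
  have hδpos : 0 < δ := lt_min hδ₀ hrx
  filter_upwards [Metric.ball_mem_nhds (0 : E) hδpos] with h hh
  have hnorm : ‖h‖ < δ := by rwa [mem_ball, dist_zero_right] at hh
  have hxh : x + h ∈ ball c r := by
    rw [mem_ball]
    have h1 : dist (x + h) x = ‖h‖ := by simp [dist_eq_norm]
    have h2 : δ ≤ r - dist x c := min_le_right _ _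
    calc dist (x + h) c ≤ dist (x + h) x + dist x c := dist_triangle _ _ _
      _ < r := by rw [h1]; linarith
  have hmem : ∀ τ : ℝ, τ ∈ Icc (0:ℝ) 1 → x + τ • h ∈ ball c r := by
    intro τ ⟨hτ0, hτ1⟩
    rw [mem_ball]
    have h1 : dist (x + τ • h) x = ‖τ • h‖ := by simp [dist_eq_norm]
    have h2 : ‖τ • h‖ ≤ ‖h‖ := by
      rw [norm_smul, Real.norm_eq_abs, abs_of_nonneg hτ0]
      nlinarith [norm_nonneg h]
    have h3 : δ ≤ r - dist x c := min_le_right _ _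
    calc dist (x + τ • h) c ≤ dist (x + τ • h) x + dist x c := dist_triangle _ _ _
      _ < r := by rw [h1]; linarith
  have hgreen := green hs hαdiff hαclosed hball hx hxh
  rw [show x + h - x = h by abel] at hgreen
  have hαc : ContinuousOn α s := fun z hz => (hαdiff z hz).continuousAt.continuousWithinAt
  have hint1 : IntervalIntegrable (fun τ => α (x + τ • h) h) MeasureTheory.volume 0 1 := by
    apply ContinuousOn.intervalIntegrable
    rw [uIcc_of_le zero_le_one]
    exact ((hαc.comp (by fun_prop : Continuous fun τ : ℝ => x + τ • h).continuousOn
      (fun τ hτ => hball (hmem τ hτ))).clm_apply continuousOn_const)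
  have hint2 : IntervalIntegrable (fun _ : ℝ => α x h) MeasureTheory.volume 0 1 :=
    intervalIntegrable_const
  have hsplit : (fun z => ∫ τ in (0:ℝ)..1, α (c + τ • (z - c)) (z - c)) (x + h)
      - (fun z => ∫ τ in (0:ℝ)..1, α (c + τ • (z - c)) (z - c)) x - α x h
      = ∫ τ in (0:ℝ)..1, (α (x + τ • h) h - α x h) := by
    rw [intervalIntegral.integral_sub hint1 hint2]
    simp only [intervalIntegral.integral_const, sub_zero, one_smul]
    rw [← hgreen]
  rw [hsplit]
  have hbound := intervalIntegral.norm_integral_le_of_norm_le_const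
    (C := ε * ‖h‖) (f := fun τ => α (x + τ • h) h - α x h) (a := 0) (b := 1) ?_
  · simpa using hbound
  · intro τ hτ
    rw [uIoc_of_le zero_le_one] at hτ
    have hτIcc : τ ∈ Icc (0:ℝ) 1 := ⟨hτ.1.le, hτ.2⟩
    have hdist : dist (x + τ • h) x < δ₀ := by
      have h1 : dist (x + τ • h) x = ‖τ • h‖ := by simp [dist_eq_norm]
      have h2 : ‖τ • h‖ ≤ ‖h‖ := by
        rw [norm_smul, Real.norm_eq_abs, abs_of_nonneg hτIcc.1]
        nlinarith [norm_nonneg h, hτIcc.1, hτIcc.2]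
      have h3 : δ ≤ δ₀ := min_le_left _ _
      rw [h1]; linarith
    have hαclose : ‖α (x + τ • h) - α x‖ < ε := by
      have := hδ hdist
      rwa [dist_eq_norm] at this
    calc ‖α (x + τ • h) h - α x h‖ = ‖(α (x + τ • h) - α x) h‖ := by
          simp [ContinuousLinearMap.sub_apply]
      _ ≤ ‖α (x + τ • h) - α x‖ * ‖h‖ := ContinuousLinearMap.le_opNorm _ _
      _ ≤ ε * ‖h‖ := by
          have := norm_nonneg h
          nlinarith

/-- Two primitives of `α` on two balls have equal increments on the intersection. -/
lemma prim_sub {α : E → E →L[ℝ] ℝ} {c₁ c₂ : E} {r₁ r₂ : ℝ} {f g : E → ℝ}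
    (hf : ∀ x ∈ ball c₁ r₁, HasFDerivAt f (α x) x)
    (hg : ∀ x ∈ ball c₂ r₂, HasFDerivAt g (α x) x)
    {P Q : E} (hP : P ∈ ball c₁ r₁ ∩ ball c₂ r₂) (hQ : Q ∈ ball c₁ r₁ ∩ ball c₂ r₂) :
    f P - f Q = g P - g Q := by
  set D := ball c₁ r₁ ∩ ball c₂ r₂ with hD
  have hDo : IsOpen D := isOpen_ball.inter isOpen_ball
  have hDc : Convex ℝ D := (convex_ball c₁ r₁).inter (convex_ball c₂ r₂)
  have hsub : ∀ z ∈ D, HasFDerivAt (fun w => f w - g w) (0 : E →L[ℝ] ℝ) z := by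
    intro z hz
    have h := (hf z hz.1).sub (hg z hz.2)
    rw [sub_self] at h
    exact h
  have hkey : (fun w => f w - g w) P = (fun w => f w - g w) Q := by
    apply hDc.is_const_of_fderivWithin_eq_zero
      (fun z hz => ((hsub z hz).differentiableAt).differentiableWithinAt) _ hP hQ
    intro z hz
    rw [fderivWithin_of_mem_nhds (hDo.mem_nhds hz)]
    exact (hsub z hz).fderiv
  simp only at hkey
  linarith

/-- FTC along a C¹ path inside a ball with a primitive. -/
lemma ftc_seg {α : E → E →L[ℝ] ℝ} {c : E} {r : ℝ} {f : E → ℝ}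
    (hf : ∀ z ∈ ball c r, HasFDerivAt f (α z) z)
    {γ γ' : ℝ → E} {a b : ℝ}
    (hγ : ∀ t ∈ Set.uIcc a b, HasDerivAt γ (γ' t) t)
    (hmem : ∀ t ∈ Set.uIcc a b, γ t ∈ ball c r)
    (hcont : ContinuousOn (fun t => α (γ t) (γ' t)) (Set.uIcc a b)) :
    ∫ t in a..b, α (γ t) (γ' t) = f (γ b) - f (γ a) := by
  apply intervalIntegral.integral_eq_sub_of_hasDerivAt
  · intro t ht
    exact (hf _ (hmem t ht)).comp_hasDerivAt t (hγ t ht)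
  · exact hcont.intervalIntegrable

/-- radius for a compact set inside an open set -/
lemma compact_radius {K U : Set E} (hK : IsCompact K) (hU : IsOpen U) (hKU : K ⊆ U) :
    ∃ r > 0, ∀ k ∈ K, ball k r ⊆ U := by
  obtain ⟨r, hr, hrs⟩ := hK.exists_thickening_subset_open hU hKU
  exact ⟨r, hr, fun k hk => (ball_subset_thickening hk r).trans hrs⟩

lemma partB {s : Set E} (hs : IsOpen s) {α : E → E →L[ℝ] ℝ}
    (hαdiff : ∀ x ∈ s, DifferentiableAt ℝ α x)
    (hαclosed : ∀ x ∈ s, ∀ u v, fderiv ℝ α x u v = fderiv ℝ α x v u)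
    (z₀ : E) (H : ℝ → ℝ → E) (u₀ : ℝ)
    (hH1 : ContDiff ℝ 1 (Function.uncurry H))
    (hHs : ∀ t u, H t u ∈ s) (hH0 : ∀ u, H 0 u = z₀) :
    HasDerivAt (fun u => ∫ t in (0:ℝ)..1, α (H t u) (deriv (fun τ => H τ u) t))
      (α (H 1 u₀) (deriv (fun u => H 1 u) u₀)) u₀ := by
  classical
  have hQc : IsCompact (Icc (0:ℝ) 1 ×ˢ Icc (u₀ - 1) (u₀ + 1)) := isCompact_Icc.prod isCompact_Icc
  have hKs : Function.uncurry H '' (Icc (0:ℝ) 1 ×ˢ Icc (u₀ - 1) (u₀ + 1)) ⊆ s := by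
    rintro _ ⟨p, hp, rfl⟩; exact hHs p.1 p.2
  obtain ⟨r, hr, hrs⟩ := compact_radius (hQc.image hH1.continuous) hs hKs
  have hUC := hQc.uniformContinuousOn_of_continuous hH1.continuous.continuousOn
  rw [Metric.uniformContinuousOn_iff] at hUC
  obtain ⟨δ, hδpos, hδ⟩ := hUC r hr
  obtain ⟨n, hδn⟩ := exists_nat_one_div_lt hδpos
  set N : ℕ := n + 1 with hN
  have hNpos : (0:ℝ) < N := by positivity
  have h1N : 1 / (N:ℝ) < δ := by exact_mod_cast hδn
  have h1N1 : 1 / (N:ℝ) ≤ 1 := by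
    rw [div_le_one hNpos]; exact_mod_cast Nat.one_le_iff_ne_zero.2 (by omega)
  -- corner points are in the parameter square
  have hcorner : ∀ i : ℕ, i < N → ((i:ℝ)/N, u₀) ∈ Icc (0:ℝ) 1 ×ˢ Icc (u₀ - 1) (u₀ + 1) := by
    intro i hi
    refine ⟨⟨by positivity, ?_⟩, by constructor <;> linarith⟩
    rw [div_le_one hNpos]
    exact_mod_cast hi.le
  -- squares land in balls
  have hmem : ∀ i : ℕ, i < N → ∀ t u : ℝ, t ∈ Icc ((i:ℝ)/N) (((i:ℝ)+1)/N) → |u - u₀| ≤ 1/N →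
      H t u ∈ ball (H ((i:ℝ)/N) u₀) r := by
    intro i hi t u ht hu
    have hiN : ((i:ℝ)+1)/N ≤ 1 := by
      rw [div_le_one hNpos]; exact_mod_cast hi
    have htI : t ∈ Icc (0:ℝ) 1 := ⟨le_trans (by positivity) ht.1, le_trans ht.2 hiN⟩
    have huI : u ∈ Icc (u₀ - 1) (u₀ + 1) := by
      obtain ⟨h1, h2⟩ := abs_le.1 hu
      constructor <;> [linarith [h1N1]; linarith [h1N1]]
    have hd : dist (t, u) (((i:ℝ)/N, u₀)) < δ := by
      rw [Prod.dist_eq]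
      have hd1 : dist t ((i:ℝ)/N) ≤ 1/N := by
        rw [Real.dist_eq, abs_le]
        have hsum : (i:ℝ)/N + 1/N = ((i:ℝ)+1)/N := (add_div (i:ℝ) 1 (N:ℝ)).symm
        have hNnn : (0:ℝ) ≤ 1/N := by positivity
        constructor <;> [linarith [ht.1]; linarith [ht.2]]
      have hd2 : dist u u₀ ≤ 1/N := by rwa [Real.dist_eq]
      exact lt_of_le_of_lt (max_le hd1 hd2) h1N
    have := hδ (t, u) ⟨htI, huI⟩ (((i:ℝ)/N, u₀)) (hcorner i hi) hd
    rwa [mem_ball]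
  -- primitives on the balls
  have hprim : ∀ i : ℕ, i < N → ∃ f : E → ℝ,
      ∀ z ∈ ball (H ((i:ℝ)/N) u₀) r, HasFDerivAt f (α z) z := by
    intro i hi
    exact primitive_ball hs hαdiff hαclosed
      (hrs _ ⟨((i:ℝ)/N, u₀), hcorner i hi, rfl⟩)
  set g : ℕ → E → ℝ := fun i => if h : i < N then (hprim i h).choose else 0 with hgdef
  have hg : ∀ i : ℕ, ∀ hi : i < N, ∀ z ∈ ball (H ((i:ℝ)/N) u₀) r,
      HasFDerivAt (g i) (α z) z := by
    intro i hi
    simp only [hgdef, dif_pos hi]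
    exact (hprim i hi).choose_spec
  -- continuity/differentiability of the paths
  have hγC1 : ∀ u : ℝ, ContDiff ℝ 1 (fun t => H t u) := fun u =>
    hH1.comp (contDiff_id.prodMk contDiff_const)
  have hcurveC1 : ∀ c : ℝ, ContDiff ℝ 1 (fun u => H c u) := fun c =>
    hH1.comp (contDiff_const.prodMk contDiff_id)
  have hint : ∀ u : ℝ, Continuous fun t => α (H t u) (deriv (fun τ => H τ u) t) := by
    intro u
    have h1 : Continuous fun t => α (H t u) := continuous_iff_continuousAt.2 fun t =>
      ContinuousAt.comp (hαdiff _ (hHs t u)).continuousAt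
        ((hγC1 u).continuous.continuousAt : ContinuousAt (fun t => H t u) t)
    exact h1.clm_apply ((hγC1 u).continuous_deriv le_rfl)
  -- the integral equals the sum of primitive increments near u₀
  have hIeq : ∀ u : ℝ, |u - u₀| ≤ 1/N →
      (∫ t in (0:ℝ)..1, α (H t u) (deriv (fun τ => H τ u) t)) =
        ∑ i ∈ Finset.range N, (g i (H (((i:ℝ)+1)/N) u) - g i (H ((i:ℝ)/N) u)) := by
    intro u hu
    have hintegrable : ∀ k : ℕ, k < N → IntervalIntegrable
        (fun t => α (H t u) (deriv (fun τ => H τ u) t)) MeasureTheory.volume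
        ((k:ℝ)/N) ((k+1:ℕ)/N) := fun k _ => (hint u).intervalIntegrable _ _
    have key := intervalIntegral.sum_integral_adjacent_intervals
      (a := fun k : ℕ => (k:ℝ)/N) (n := N) hintegrable
    simp only [Nat.cast_zero, zero_div, div_self (ne_of_gt hNpos)] at key
    rw [← key]
    refine Finset.sum_congr rfl fun i hi => ?_
    have hiN : i < N := Finset.mem_range.1 hi
    have hle : (i:ℝ)/N ≤ ((i:ℝ)+1)/N := by
      gcongr
      linarith
    have hcast : (((i+1:ℕ)):ℝ)/N = ((i:ℝ)+1)/N := by push_cast; ring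
    rw [hcast]
    exact ftc_seg (hg i hiN)
      (fun t _ => ((hγC1 u).differentiable one_ne_zero t).hasDerivAt)
      (fun t ht => hmem i hiN t u (by rwa [uIcc_of_le hle] at ht) hu)
      (hint u).continuousOn
  -- derivative of the sum of primitive increments
  set ψ : ℕ → ℝ := fun i => α (H ((i:ℝ)/N) u₀) (deriv (fun u => H ((i:ℝ)/N) u) u₀) with hψdef
  have hzero : |u₀ - u₀| ≤ 1/N := by simp only [sub_self, abs_zero]; positivity
  have hsum : HasDerivAt
      (fun u => ∑ i ∈ Finset.range N, (g i (H (((i:ℝ)+1)/N) u) - g i (H ((i:ℝ)/N) u)))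
      (∑ i ∈ Finset.range N, (ψ (i+1) - ψ i)) u₀ := by
    apply HasDerivAt.fun_sum
    intro i hi
    have hiN := Finset.mem_range.1 hi
    have hle : (i:ℝ)/N ≤ ((i:ℝ)+1)/N := by
      gcongr
      linarith
    have hd : ∀ c : ℝ, H c u₀ ∈ ball (H ((i:ℝ)/N) u₀) r →
        HasDerivAt (fun u => g i (H c u)) (α (H c u₀) (deriv (fun u => H c u) u₀)) u₀ := by
      intro c hc
      have hHc : HasDerivAt (fun u => H c u) (deriv (fun u => H c u) u₀) u₀ :=
        ((hcurveC1 c).differentiable one_ne_zero u₀).hasDerivAt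
      exact (hg i hiN _ hc).comp_hasDerivAt u₀ hHc
    have h1 := hd (((i:ℝ)+1)/N) (hmem i hiN _ u₀ ⟨hle, le_rfl⟩ hzero)
    have h2 := hd ((i:ℝ)/N) (hmem i hiN _ u₀ ⟨le_rfl, hle⟩ hzero)
    have hcast : (((i+1:ℕ)):ℝ)/N = ((i:ℝ)+1)/N := by push_cast; ring
    have := h1.sub h2
    simp only [hψdef, hcast]
    exact this
  have htel : (∑ i ∈ Finset.range N, (ψ (i+1) - ψ i)) = ψ N - ψ 0 := Finset.sum_range_sub ψ N
  have hψN : ψ N = α (H 1 u₀) (deriv (fun u => H 1 u) u₀) := by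
    have h1 : ((N:ℕ):ℝ)/N = 1 := by rw [div_eq_one_iff_eq (ne_of_gt hNpos)]
    simp only [hψdef, h1]
  have hψ0 : ψ 0 = 0 := by
    have h0 : ((0:ℕ):ℝ)/N = 0 := by simp
    have hc : (fun u : ℝ => H 0 u) = fun _ => z₀ := funext hH0
    simp only [hψdef, h0, hc, deriv_const]
    exact map_zero _
  rw [htel, hψN, hψ0, sub_zero] at hsum
  refine hsum.congr_of_eventuallyEq ?_
  refine Filter.eventually_of_mem (Metric.ball_mem_nhds u₀ (by positivity : (0:ℝ) < 1/N)) ?_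
  intro u hu
  exact hIeq u (le_of_lt (by rwa [mem_ball, Real.dist_eq] at hu))

lemma partA {s : Set E} (hs : IsOpen s) {α : E → E →L[ℝ] ℝ}
    (hαdiff : ∀ x ∈ s, DifferentiableAt ℝ α x)
    (hαclosed : ∀ x ∈ s, ∀ u v, fderiv ℝ α x u v = fderiv ℝ α x v u)
    (z₀ z₁ : E) (x y : ℝ → E) (H : ℝ → ℝ → E)
    (hx : ContDiff ℝ 1 x) (hy : ContDiff ℝ 1 y)
    (hHcont : Continuous (Function.uncurry H))
    (hHs : ∀ t u, H t u ∈ s)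
    (hHx : ∀ t, H t 0 = x t) (hHy : ∀ t, H t 1 = y t)
    (hH0 : ∀ u, H 0 u = z₀) (hH1 : ∀ u, H 1 u = z₁) :
    ∫ t in (0:ℝ)..1, α (x t) (deriv x t) = ∫ t in (0:ℝ)..1, α (y t) (deriv y t) := by
  classical
  have hQc : IsCompact (Icc (0:ℝ) 1 ×ˢ Icc (0:ℝ) 1) := isCompact_Icc.prod isCompact_Icc
  have hKs : Function.uncurry H '' (Icc (0:ℝ) 1 ×ˢ Icc (0:ℝ) 1) ⊆ s := by
    rintro _ ⟨p, hp, rfl⟩; exact hHs p.1 p.2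
  obtain ⟨r, hr, hrs⟩ := compact_radius (hQc.image hHcont) hs hKs
  have hUC := hQc.uniformContinuousOn_of_continuous hHcont.continuousOn
  rw [Metric.uniformContinuousOn_iff] at hUC
  obtain ⟨δ, hδpos, hδ⟩ := hUC r hr
  obtain ⟨n, hδn⟩ := exists_nat_one_div_lt hδpos
  set N : ℕ := n + 1 with hNdef
  have hNpos : (0:ℝ) < N := by positivity
  have h1N : 1 / (N:ℝ) < δ := by exact_mod_cast hδn
  have hcast : ∀ m : ℕ, ((m+1:ℕ):ℝ)/N = ((m:ℝ)+1)/N := by intro m; push_cast; ring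
  have hle : ∀ m : ℕ, (m:ℝ)/N ≤ ((m:ℝ)+1)/N := by
    intro m; gcongr; linarith
  have hIcc : ∀ m : ℕ, m ≤ N → (m:ℝ)/N ∈ Icc (0:ℝ) 1 := by
    intro m hm
    refine ⟨by positivity, ?_⟩
    rw [div_le_one hNpos]; exact_mod_cast hm
  have hcorner : ∀ i j : ℕ, i ≤ N → j ≤ N → ((i:ℝ)/N, (j:ℝ)/N) ∈
      Icc (0:ℝ) 1 ×ˢ Icc (0:ℝ) 1 := fun i j hi hj => ⟨hIcc i hi, hIcc j hj⟩
  set a : ℕ → ℝ := fun m => (m:ℝ)/N with hadef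
  have ha_succ : ∀ m : ℕ, a (m+1) = ((m:ℝ)+1)/N := by
    intro m; simp only [hadef]; push_cast; ring
  have hale : ∀ m : ℕ, a m ≤ a (m+1) := by
    intro m; rw [ha_succ]; exact hle m
  have ha0 : a 0 = 0 := by simp [hadef]
  have haN : a N = 1 := by
    simp only [hadef]; rw [div_eq_one_iff_eq (ne_of_gt hNpos)]
  have haIcc : ∀ m : ℕ, m ≤ N → a m ∈ Icc (0:ℝ) 1 := fun m hm => hIcc m hm
  have hmemSq : ∀ i j : ℕ, i < N → j < N → ∀ t u : ℝ,
      t ∈ Icc (a i) (a (i+1)) → u ∈ Icc (a j) (a (j+1)) →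
      H t u ∈ ball (H (a i) (a j)) r := by
    intro i j hi hj t u ht hu
    rw [ha_succ] at ht hu
    simp only [hadef] at ht hu ⊢
    have hiN : ((i:ℝ)+1)/N ≤ 1 := by rw [div_le_one hNpos]; exact_mod_cast hi
    have hjN : ((j:ℝ)+1)/N ≤ 1 := by rw [div_le_one hNpos]; exact_mod_cast hj
    have htI : t ∈ Icc (0:ℝ) 1 := ⟨le_trans (by positivity) ht.1, le_trans ht.2 hiN⟩
    have huI : u ∈ Icc (0:ℝ) 1 := ⟨le_trans (by positivity) hu.1, le_trans hu.2 hjN⟩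
    have hNnn : (0:ℝ) ≤ 1/N := by positivity
    have hd : dist (t, u) (((i:ℝ)/N, (j:ℝ)/N)) < δ := by
      rw [Prod.dist_eq]
      have hsum1 : (i:ℝ)/N + 1/N = ((i:ℝ)+1)/N := (add_div (i:ℝ) 1 (N:ℝ)).symm
      have hsum2 : (j:ℝ)/N + 1/N = ((j:ℝ)+1)/N := (add_div (j:ℝ) 1 (N:ℝ)).symm
      have hd1 : dist t ((i:ℝ)/N) ≤ 1/N := by
        rw [Real.dist_eq, abs_le]
        constructor <;> [linarith [ht.1]; linarith [ht.2]]
      have hd2 : dist u ((j:ℝ)/N) ≤ 1/N := by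
        rw [Real.dist_eq, abs_le]
        constructor <;> [linarith [hu.1]; linarith [hu.2]]
      exact lt_of_le_of_lt (max_le hd1 hd2) h1N
    have := hδ (t, u) ⟨htI, huI⟩ (((i:ℝ)/N, (j:ℝ)/N)) (hcorner i j hi.le hj.le) hd
    rwa [mem_ball]
  have hprim : ∀ i j : ℕ, i < N → j < N → ∃ f : E → ℝ,
      ∀ z ∈ ball (H (a i) (a j)) r, HasFDerivAt f (α z) z := by
    intro i j hi hj
    refine primitive_ball hs hαdiff hαclosed (hrs _ ⟨(a i, a j), ?_, rfl⟩)
    exact ⟨haIcc i hi.le, haIcc j hj.le⟩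
  set g : ℕ → ℕ → E → ℝ := fun i j =>
    if h : i < N ∧ j < N then (hprim i j h.1 h.2).choose else 0 with hgdef
  have hg : ∀ i j : ℕ, i < N → j < N → ∀ z ∈ ball (H (a i) (a j)) r,
      HasFDerivAt (g i j) (α z) z := by
    intro i j hi hj
    simp only [hgdef, dif_pos (And.intro hi hj)]
    exact (hprim i j hi hj).choose_spec
  -- row sums
  set R : ℕ → ℕ → ℝ := fun j k => ∑ i ∈ Finset.range N,
    (g i j (H (a (i+1)) (a k)) - g i j (H (a i) (a k))) with hRdef
  -- bottom row equals the integral over x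
  have hxint : Continuous fun t => α (x t) (deriv x t) := by
    have h1 : Continuous fun t => α (x t) := continuous_iff_continuousAt.2 fun t =>
      ContinuousAt.comp (hαdiff _ (hHx t ▸ hHs t 0)).continuousAt (hx.continuous.continuousAt)
    exact h1.clm_apply (hx.continuous_deriv le_rfl)
  have hyint : Continuous fun t => α (y t) (deriv y t) := by
    have h1 : Continuous fun t => α (y t) := continuous_iff_continuousAt.2 fun t =>
      ContinuousAt.comp (hαdiff _ (hHy t ▸ hHs t 1)).continuousAt (hy.continuous.continuousAt)
    exact h1.clm_apply (hy.continuous_deriv le_rfl)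
  have hbottom : (∫ t in (0:ℝ)..1, α (x t) (deriv x t)) = R 0 0 := by
    have key := intervalIntegral.sum_integral_adjacent_intervals
      (a := a) (n := N) (f := fun t => α (x t) (deriv x t))
      (fun k _ => (hxint.intervalIntegrable _ _ : IntervalIntegrable _ MeasureTheory.volume _ _))
    rw [ha0, haN] at key
    rw [← key, hRdef]
    refine Finset.sum_congr rfl fun i hi => ?_
    have hiN := Finset.mem_range.1 hi
    have h0mem : (0:ℝ) ∈ Icc (a 0) (a 1) := by
      constructor
      · rw [ha0]
      · rw [← ha0]; exact hale 0
    have hftc := ftc_seg (hg i 0 hiN (by omega))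
      (fun t _ => ((hx.differentiable one_ne_zero) t).hasDerivAt)
      (fun t ht => by
        rw [← hHx t]
        exact hmemSq i 0 hiN (by omega) t 0
          (by rwa [uIcc_of_le (hale i)] at ht) h0mem)
      hxint.continuousOn
    rw [hftc, ha0, hHx, hHx]
  have htop : (∫ t in (0:ℝ)..1, α (y t) (deriv y t)) = R n N := by
    have key := intervalIntegral.sum_integral_adjacent_intervals
      (a := a) (n := N) (f := fun t => α (y t) (deriv y t))
      (fun k _ => (hyint.intervalIntegrable _ _ : IntervalIntegrable _ MeasureTheory.volume _ _))
    rw [ha0, haN] at key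
    rw [← key, hRdef]
    refine Finset.sum_congr rfl fun i hi => ?_
    have hiN := Finset.mem_range.1 hi
    have h1mem : (1:ℝ) ∈ Icc (a n) (a (n+1)) := by
      constructor
      · exact (haIcc n (by omega)).2
      · rw [show n + 1 = N from rfl, haN]
    have hftc := ftc_seg (hg i n hiN (by omega))
      (fun t _ => ((hy.differentiable one_ne_zero) t).hasDerivAt)
      (fun t ht => by
        rw [← hHy t]
        exact hmemSq i n hiN (by omega) t 1
          (by rwa [uIcc_of_le (hale i)] at ht) h1mem)
      hyint.continuousOn
    rw [hftc, show (N:ℕ) = n + 1 from rfl, haN, hHy, hHy]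
  -- vertical step
  have hvert : ∀ j : ℕ, j < N → R j j = R j (j+1) := by
    intro j hj
    set Φ : ℕ → ℝ := fun i => if h : i < N then
      g i j (H (a i) (a (j+1))) - g i j (H (a i) (a j)) else 0 with hΦdef
    have hΦ0 : Φ 0 = 0 := by
      simp only [hΦdef, dif_pos (show 0 < N by omega), ha0, hH0, sub_self]
    have hΦN : Φ N = 0 := by simp only [hΦdef, dif_neg (lt_irrefl N)]
    have hΦsucc : ∀ i : ℕ, i < N →
        g i j (H (a (i+1)) (a (j+1))) - g i j (H (a (i+1)) (a j)) = Φ (i+1) := by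
      intro i hi
      by_cases hi1 : i + 1 < N
      · have hP1 : H (a (i+1)) (a (j+1)) ∈ ball (H (a i) (a j)) r :=
          hmemSq i j hi hj _ _ ⟨hale i, le_rfl⟩ ⟨hale j, le_rfl⟩
        have hQ1 : H (a (i+1)) (a j) ∈ ball (H (a i) (a j)) r :=
          hmemSq i j hi hj _ _ ⟨hale i, le_rfl⟩ ⟨le_rfl, hale j⟩
        have hP2 : H (a (i+1)) (a (j+1)) ∈ ball (H (a (i+1)) (a j)) r :=
          hmemSq (i+1) j hi1 hj _ _ ⟨le_rfl, hale (i+1)⟩ ⟨hale j, le_rfl⟩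
        have hQ2 : H (a (i+1)) (a j) ∈ ball (H (a (i+1)) (a j)) r :=
          hmemSq (i+1) j hi1 hj _ _ ⟨le_rfl, hale (i+1)⟩ ⟨le_rfl, hale j⟩
        rw [hΦdef]
        simp only [dif_pos hi1]
        exact prim_sub (hg i j hi hj) (hg (i+1) j hi1 hj) ⟨hP1, hP2⟩ ⟨hQ1, hQ2⟩
      · have hiN : i + 1 = N := by omega
        have hai1 : a (i+1) = 1 := by rw [hiN, haN]
        rw [hΦdef]
        simp only [dif_neg hi1, hai1, hH1, sub_self]
    have htel := Finset.sum_range_sub Φ N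
    have hsum : R j (j+1) - R j j = ∑ i ∈ Finset.range N, (Φ (i+1) - Φ i) := by
      rw [hRdef]
      simp only
      rw [← Finset.sum_sub_distrib]
      refine Finset.sum_congr rfl fun i hi => ?_
      have hiN := Finset.mem_range.1 hi
      have h1 := hΦsucc i hiN
      have h2 : Φ i = g i j (H (a i) (a (j+1))) - g i j (H (a i) (a j)) := by
        rw [hΦdef]; simp only [dif_pos hiN]
      linarith
    rw [htel, hΦN, hΦ0] at hsum
    linarith
  -- horizontal step
  have hhor : ∀ j : ℕ, j + 1 < N → R j (j+1) = R (j+1) (j+1) := by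
    intro j hj1
    have hj : j < N := by omega
    rw [hRdef]
    refine Finset.sum_congr rfl fun i hi => ?_
    have hiN := Finset.mem_range.1 hi
    have hP1 : H (a (i+1)) (a (j+1)) ∈ ball (H (a i) (a j)) r :=
      hmemSq i j hiN hj _ _ ⟨hale i, le_rfl⟩ ⟨hale j, le_rfl⟩
    have hQ1 : H (a i) (a (j+1)) ∈ ball (H (a i) (a j)) r :=
      hmemSq i j hiN hj _ _ ⟨le_rfl, hale i⟩ ⟨hale j, le_rfl⟩
    have hP2 : H (a (i+1)) (a (j+1)) ∈ ball (H (a i) (a (j+1))) r :=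
      hmemSq i (j+1) hiN hj1 _ _ ⟨hale i, le_rfl⟩ ⟨le_rfl, hale (j+1)⟩
    have hQ2 : H (a i) (a (j+1)) ∈ ball (H (a i) (a (j+1))) r :=
      hmemSq i (j+1) hiN hj1 _ _ ⟨le_rfl, hale i⟩ ⟨le_rfl, hale (j+1)⟩
    exact prim_sub (hg i j hiN hj) (hg i (j+1) hiN hj1) ⟨hP1, hP2⟩ ⟨hQ1, hQ2⟩
  -- chain
  have hchain : ∀ j : ℕ, j < N → R 0 0 = R j (j+1) := by
    intro j
    induction j with
    | zero => intro h0; exact hvert 0 h0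
    | succ k ih =>
      intro hk
      have hk' : k < N := by omega
      calc R 0 0 = R k (k+1) := ih hk'
        _ = R (k+1) (k+1) := hhor k hk
        _ = R (k+1) (k+2) := hvert (k+1) hk
  rw [hbottom, htop]
  have := hchain n (by omega)
  rwa [show n + 1 = N from rfl] at this

end Stmt10Aux

/-- let `(M,ω)` be a connected symplectic manifold (modeled here as a
connected open set `s` of a real normed space `E` with a smooth skew-symmetric closed
nondegenerate-free 2-form `ω`), with a symplectic group action whose infinitesimal
generator for `ξ ∈ 𝔤` is the vector field `X`, so `α = ι_{ξ_M} ω` is a closed 1-form.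
Then:
(a) the integral `∫₀¹ ω(x(t))(ξ_M(x(t)), ẋ(t)) dt` depends only on the homotopy class
of the path `x` rel endpoints, so it defines a map `J^ξ` on the universal cover `M̃`;
(b) `J^ξ` is a momentum map for the lifted action: its derivative along any smooth
family of paths (all beginning at `z₀`, i.e. a curve in `M̃`) is `α = ι_{ξ_M}ω`
evaluated at the endpoint on the endpoint velocity, i.e. `d⟨J,ξ⟩ = ι_{ξ_{M̃}} q*ω`. -/
theorem stmt10 {E : Type*} [NormedAddCommGroup E] [NormedSpace ℝ E]
    (s : Set E) (hs : IsOpen s) (hconn : IsConnected s)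
    (ω : E → E →L[ℝ] E →L[ℝ] ℝ) (X : E → E)
    (hωcont : ContinuousOn ω s) (hXcont : ContinuousOn X s)
    (hskew : ∀ x ∈ s, ∀ u v, ω x u v = - (ω x v u))
    (α : E → E →L[ℝ] ℝ) (hα : ∀ x, α x = ω x (X x))
    (hαdiff : ∀ x ∈ s, DifferentiableAt ℝ α x)
    (hαclosed : ∀ x ∈ s, ∀ u v, fderiv ℝ α x u v = fderiv ℝ α x v u)
    (z₀ z₁ : E) (hz₀ : z₀ ∈ s) (hz₁ : z₁ ∈ s) :
    (∀ (x y : ℝ → E) (H : ℝ → ℝ → E),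
        ContDiff ℝ 1 x → ContDiff ℝ 1 y →
        Continuous (Function.uncurry H) →
        (∀ t u, H t u ∈ s) →
        (∀ t, H t 0 = x t) → (∀ t, H t 1 = y t) →
        (∀ u, H 0 u = z₀) → (∀ u, H 1 u = z₁) →
        ∫ t in (0:ℝ)..1, α (x t) (deriv x t) = ∫ t in (0:ℝ)..1, α (y t) (deriv y t))
    ∧
    (∀ (H : ℝ → ℝ → E) (u₀ : ℝ),
        ContDiff ℝ 1 (Function.uncurry H) →
        (∀ t u, H t u ∈ s) → (∀ u, H 0 u = z₀) →
        HasDerivAt (fun u => ∫ t in (0:ℝ)..1, α (H t u) (deriv (fun τ => H τ u) t))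
          (α (H 1 u₀) (deriv (fun u => H 1 u) u₀)) u₀) := by
  exact ⟨fun x y H hx hy hHcont hHs hHx hHy hH0 hH1 =>
    Stmt10Aux.partA hs hαdiff hαclosed z₀ z₁ x y H hx hy hHcont hHs hHx hHy hH0 hH1,
    fun H u₀ hH1 hHs hH0 => Stmt10Aux.partB hs hαdiff hαclosed z₀ H u₀ hH1 hHs hH0⟩
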